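/- Adding a single directed edge changes the minimum seed number by at most one: let (V, W, b) be an influence network and v₁ ≠ v₂ nodes with W(v₁,v₂) = 0. Let W' agree with W everywhere except W'(v₁,v₂) = w for some w > 0. If m and m' denote the minimum seed numbers of (V, W, b) and (V, W', b) respectively, then 0 ≤ m − m' ≤ 1. -/
import Mathlib


/-!
Influence barricade model: a finite vertex set `V : Finset ι`, edge weights
`W : ι → ι → ℝ` (an edge `u → v` exists iff `W u v > 0`), and barricade
factors `b : ι → ℝ`.  For a seed set `S ⊆ V`, the diffusion process is
`A 0 = S` and `A (t+1) = A t ∪ {u ∈ V : ∑ v ∈ A t, W v u ≥ b u}`.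
-/

open Finset

open Classical in
/-- One step of the diffusion process under the influence barricade model. -/
noncomputable def diffStep {ι : Type*} [DecidableEq ι] (V : Finset ι)
    (W : ι → ι → ℝ) (b : ι → ℝ) (A : Finset ι) : Finset ι :=
  A ∪ V.filter (fun u => b u ≤ ∑ v ∈ A, W v u)

/-- `activeSet V W b S t` is the set `A_t(S)` of nodes active at time `t`. -/
noncomputable def activeSet {ι : Type*} [DecidableEq ι] (V : Finset ι)
    (W : ι → ι → ℝ) (b : ι → ℝ) (S : Finset ι) : ℕ → Finset ι
  | 0 => S
  | t + 1 => diffStep V W b (activeSet V W b S t)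

/-- The final active set `A(S) = A_{|V|}(S)`. -/
noncomputable def finalActive {ι : Type*} [DecidableEq ι] (V : Finset ι)
    (W : ι → ι → ℝ) (b : ι → ℝ) (S : Finset ι) : Finset ι :=
  activeSet V W b S V.card

/-- `S` achieves full influenceability: every node is eventually active. -/
def FullInf {ι : Type*} [DecidableEq ι] (V : Finset ι) (W : ι → ι → ℝ)
    (b : ι → ℝ) (S : Finset ι) : Prop :=
  finalActive V W b S = V

/-- `σ(S)`: the number of nodes active at the end of the influence process. -/
noncomputable def sigmaInf {ι : Type*} [DecidableEq ι] (V : Finset ι)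
    (W : ι → ι → ℝ) (b : ι → ℝ) (S : Finset ι) : ℕ :=
  (finalActive V W b S).card

/-- The minimum seed number: the least cardinality of a seed set achieving
full influenceability. -/
noncomputable def minSeed {ι : Type*} [DecidableEq ι] (V : Finset ι)
    (W : ι → ι → ℝ) (b : ι → ℝ) : ℕ :=
  sInf {n | ∃ S : Finset ι, S ⊆ V ∧ S.card = n ∧ FullInf V W b S}

lemma subset_activeSet {ι : Type*} [DecidableEq ι] (V : Finset ι)
    (W : ι → ι → ℝ) (b : ι → ℝ) (S : Finset ι) :
    ∀ t, S ⊆ activeSet V W b S t := by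
  intro t
  induction t with
  | zero => exact subset_refl _
  | succ t ih =>
    exact ih.trans (by simp [activeSet, diffStep, Finset.subset_union_left])

lemma activeSet_subset_V {ι : Type*} [DecidableEq ι] (V : Finset ι)
    (W : ι → ι → ℝ) (b : ι → ℝ) {S : Finset ι} (hS : S ⊆ V) :
    ∀ t, activeSet V W b S t ⊆ V := by
  intro t
  induction t with
  | zero => exact hS
  | succ t ih =>
    simp only [activeSet, diffStep]
    exact Finset.union_subset ih (Finset.filter_subset _ _)

lemma fullInf_V {ι : Type*} [DecidableEq ι] (V : Finset ι)
    (W : ι → ι → ℝ) (b : ι → ℝ) : FullInf V W b V :=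
  Finset.Subset.antisymm (activeSet_subset_V V W b (subset_refl V) _)
    (subset_activeSet V W b V _)

lemma activeSet_mono_W {ι : Type*} [DecidableEq ι] (V : Finset ι)
    (W W' : ι → ι → ℝ) (b : ι → ℝ) (S : Finset ι)
    (hle : ∀ u v, W u v ≤ W' u v) (h0 : ∀ u v, 0 ≤ W' u v) :
    ∀ t, activeSet V W b S t ⊆ activeSet V W' b S t := by
  intro t
  induction t with
  | zero => exact subset_refl _
  | succ t ih =>
    simp only [activeSet, diffStep]
    apply Finset.union_subset
    · exact ih.trans Finset.subset_union_left
    · intro u hu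
      rw [Finset.mem_filter] at hu
      apply Finset.mem_union_right
      rw [Finset.mem_filter]
      refine ⟨hu.1, hu.2.trans ?_⟩
      calc ∑ v ∈ activeSet V W b S t, W v u
          ≤ ∑ v ∈ activeSet V W b S t, W' v u :=
            Finset.sum_le_sum (fun v _ => hle v u)
        _ ≤ ∑ v ∈ activeSet V W' b S t, W' v u :=
            Finset.sum_le_sum_of_subset_of_nonneg ih (fun v _ _ => h0 v u)

/-- adding a single directed edge (between two nodes with no such
edge) decreases the minimum seed number by at most one. -/
theorem minSeed_add_single_edge {ι : Type*} [DecidableEq ι]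
    (V : Finset ι) (W W' : ι → ι → ℝ) (b : ι → ℝ)
    (hW : ∀ u v, 0 ≤ W u v) (hb : ∀ u, 0 ≤ b u)
    (v₁ v₂ : ι) (hv₁ : v₁ ∈ V) (hv₂ : v₂ ∈ V) (hne : v₁ ≠ v₂)
    (h₁ : W v₁ v₂ = 0)
    (w : ℝ) (hw : 0 < w) (hW' : W' v₁ v₂ = w)
    (hagree : ∀ a c : ι, ¬(a = v₁ ∧ c = v₂) → W' a c = W a c) :
    minSeed V W' b ≤ minSeed V W b ∧
      minSeed V W b ≤ minSeed V W' b + 1 := by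
  have hW'0 : ∀ u v, 0 ≤ W' u v := by
    intro u v
    by_cases h : u = v₁ ∧ v = v₂
    · rw [h.1, h.2, hW']; exact hw.le
    · rw [hagree u v h]; exact hW u v
  have hle : ∀ u v, W u v ≤ W' u v := by
    intro u v
    by_cases h : u = v₁ ∧ v = v₂
    · rw [h.1, h.2, hW', h₁]; exact hw.le
    · rw [hagree u v h]
  have hne1 : {n | ∃ S : Finset ι, S ⊆ V ∧ S.card = n ∧ FullInf V W b S}.Nonempty :=
    ⟨V.card, V, subset_refl V, rfl, fullInf_V V W b⟩
  have hne2 : {n | ∃ S : Finset ι, S ⊆ V ∧ S.card = n ∧ FullInf V W' b S}.Nonempty :=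
    ⟨V.card, V, subset_refl V, rfl, fullInf_V V W' b⟩
  constructor
  · -- minSeed V W' b ≤ minSeed V W b
    obtain ⟨S, hSV, hScard, hSfull⟩ := Nat.sInf_mem hne1
    apply Nat.sInf_le
    refine ⟨S, hSV, hScard, ?_⟩
    unfold FullInf finalActive at hSfull ⊢
    apply Finset.Subset.antisymm (activeSet_subset_V V W' b hSV _)
    have h := activeSet_mono_W V W W' b S hle hW'0 V.card
    rw [hSfull] at h
    exact h
  · -- minSeed V W b ≤ minSeed V W' b + 1
    obtain ⟨S, hSV, hScard, hSfull⟩ := Nat.sInf_mem hne2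
    have key : ∀ t, activeSet V W' b S t ⊆ activeSet V W b (insert v₂ S) t := by
      intro t
      induction t with
      | zero => exact Finset.subset_insert _ _
      | succ t ih =>
        have hv2mem : v₂ ∈ activeSet V W b (insert v₂ S) t :=
          subset_activeSet V W b (insert v₂ S) t (Finset.mem_insert_self _ _)
        simp only [activeSet, diffStep]
        apply Finset.union_subset
        · exact ih.trans Finset.subset_union_left
        · intro u hu
          rw [Finset.mem_filter] at hu
          by_cases huv : u = v₂
          · exact Finset.mem_union_left _ (huv ▸ hv2mem)
          · apply Finset.mem_union_right
            rw [Finset.mem_filter]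
            refine ⟨hu.1, hu.2.trans ?_⟩
            calc ∑ v ∈ activeSet V W' b S t, W' v u
                = ∑ v ∈ activeSet V W' b S t, W v u :=
                  Finset.sum_congr rfl (fun v _ =>
                    hagree v u (fun h => huv h.2))
              _ ≤ ∑ v ∈ activeSet V W b (insert v₂ S) t, W v u :=
                  Finset.sum_le_sum_of_subset_of_nonneg ih (fun v _ _ => hW v u)
    have hfull : FullInf V W b (insert v₂ S) := by
      unfold FullInf finalActive
      apply Finset.Subset.antisymm
        (activeSet_subset_V V W b (Finset.insert_subset hv₂ hSV) _)
      have := key V.card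
      unfold FullInf finalActive at hSfull
      rw [hSfull] at this
      exact this
    calc minSeed V W b ≤ (insert v₂ S).card :=
          Nat.sInf_le ⟨insert v₂ S, Finset.insert_subset hv₂ hSV, rfl, hfull⟩
      _ ≤ S.card + 1 := Finset.card_insert_le _ _
      _ = minSeed V W' b + 1 := by rw [hScard]; rfl
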